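/- If all eigenvalue sums α_i + β_j of diagonalizable matrices A and B have negative real part, then for every X ∈ ℂ^(n×m), e^{tS}(X) → 0 as t → ∞, and ∫₀^∞ e^{sS}(C) ds = −S⁻¹(C) for every C, where S(X) = AX + XB. -/

import Mathlib

open Matrix

attribute [local instance] Matrix.normedAddCommGroup Matrix.normedSpace

/-- The Sylvester operator S(X) = AX + XB as a linear endomorphism of ℂ^(n×m). -/
noncomputable def sylvMap {n m : ℕ} (A : Matrix (Fin n) (Fin n) ℂ) (B : Matrix (Fin m) (Fin m) ℂ) :
    Module.End ℂ (Matrix (Fin n) (Fin m) ℂ) where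
  toFun X := A * X + X * B
  map_add' X Y := by simp [Matrix.mul_add, Matrix.add_mul]; abel
  map_smul' c X := by simp [Matrix.mul_smul, Matrix.smul_mul]

/-- The operator exponential e^{tS}(X) = ∑ₖ (tᵏ/k!) Sᵏ(X). -/
noncomputable def sylvExp {n m : ℕ} (A : Matrix (Fin n) (Fin n) ℂ)
    (B : Matrix (Fin m) (Fin m) ℂ) (t : ℝ) (X : Matrix (Fin n) (Fin m) ℂ) :
    Matrix (Fin n) (Fin m) ℂ :=
  ∑' k : ℕ, (((t : ℂ) ^ k / (Nat.factorial k : ℂ)) • ((sylvMap A B ^ k) X))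

section MatInst

@[reducible] noncomputable def matNACG {n m : ℕ} : NormedAddCommGroup (Matrix (Fin n) (Fin m) ℂ) :=
  { (Matrix.normedAddCommGroup : NormedAddCommGroup (Matrix (Fin n) (Fin m) ℂ)) with
    toUniformSpace := Matrix.instUniformSpace (Fin n) (Fin m) ℂ
    uniformity_dist :=
      (Matrix.normedAddCommGroup : NormedAddCommGroup (Matrix (Fin n) (Fin m) ℂ)).uniformity_dist }

attribute [local instance] matNACG

@[reducible] noncomputable def matNSC {n m : ℕ} : NormedSpace ℂ (Matrix (Fin n) (Fin m) ℂ) :=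
  { norm_smul_le := (Matrix.normedSpace : NormedSpace ℂ (Matrix (Fin n) (Fin m) ℂ)).norm_smul_le }

@[reducible] noncomputable def matNSR {n m : ℕ} : NormedSpace ℝ (Matrix (Fin n) (Fin m) ℂ) :=
  { norm_smul_le := (Matrix.normedSpace : NormedSpace ℝ (Matrix (Fin n) (Fin m) ℂ)).norm_smul_le }

attribute [local instance] matNSC matNSR

@[reducible] noncomputable def clmNAQ {n m : ℕ} :
    NormedAlgebra ℚ (Matrix (Fin n) (Fin m) ℂ →L[ℂ] Matrix (Fin n) (Fin m) ℂ) :=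
  .restrictScalars ℚ ℂ _

attribute [local instance] clmNAQ

namespace Stmt19Aux

open NormedSpace MulOpposite

variable {n m : ℕ}

noncomputable def lmulHom (n m : ℕ) : Matrix (Fin n) (Fin n) ℂ →ₐ[ℂ]
    (Matrix (Fin n) (Fin m) ℂ →L[ℂ] Matrix (Fin n) (Fin m) ℂ) where
  toFun A := LinearMap.toContinuousLinearMap
    { toFun := fun X => A * X
      map_add' := fun X Y => Matrix.mul_add A X Y
      map_smul' := fun c X => Matrix.mul_smul A c X }
  map_one' := by ext X; simp
  map_mul' A₁ A₂ := by ext X; simp [Matrix.mul_assoc]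
  map_zero' := by ext X; simp
  map_add' A₁ A₂ := by ext X; simp [Matrix.add_mul]
  commutes' c := by ext X; simp [Algebra.algebraMap_eq_smul_one, Matrix.smul_mul]

noncomputable def rmulHom (n m : ℕ) : (Matrix (Fin m) (Fin m) ℂ)ᵐᵒᵖ →ₐ[ℂ]
    (Matrix (Fin n) (Fin m) ℂ →L[ℂ] Matrix (Fin n) (Fin m) ℂ) where
  toFun B := LinearMap.toContinuousLinearMap
    { toFun := fun X => X * B.unop
      map_add' := fun X Y => Matrix.add_mul X Y B.unop
      map_smul' := fun c X => Matrix.smul_mul c X B.unop }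
  map_one' := by ext X; simp
  map_mul' B₁ B₂ := by ext X; simp [Matrix.mul_assoc]
  map_zero' := by ext X; simp
  map_add' B₁ B₂ := by ext X; simp [Matrix.mul_add]
  commutes' c := by ext X; simp [Algebra.algebraMap_eq_smul_one, Matrix.mul_smul]

@[simp] lemma lmulHom_apply (A : Matrix (Fin n) (Fin n) ℂ) (X : Matrix (Fin n) (Fin m) ℂ) :
    lmulHom n m A X = A * X := rfl

@[simp] lemma rmulHom_apply (B : (Matrix (Fin m) (Fin m) ℂ)ᵐᵒᵖ) (X : Matrix (Fin n) (Fin m) ℂ) :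
    rmulHom n m B X = X * B.unop := rfl

noncomputable def sylvCLM (n m : ℕ) (A : Matrix (Fin n) (Fin n) ℂ)
    (B : Matrix (Fin m) (Fin m) ℂ) :
    Matrix (Fin n) (Fin m) ℂ →L[ℂ] Matrix (Fin n) (Fin m) ℂ :=
  lmulHom n m A + rmulHom n m (MulOpposite.op B)

@[simp] lemma sylvCLM_apply (A : Matrix (Fin n) (Fin n) ℂ) (B : Matrix (Fin m) (Fin m) ℂ)
    (X : Matrix (Fin n) (Fin m) ℂ) : sylvCLM n m A B X = A * X + X * B := rfl

lemma sylvCLM_pow_apply (A : Matrix (Fin n) (Fin n) ℂ) (B : Matrix (Fin m) (Fin m) ℂ) (k : ℕ) :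
    ∀ X, ((sylvCLM n m A B) ^ k) X = ((sylvMap A B) ^ k) X := by
  induction k with
  | zero => intro X; rfl
  | succ k ih =>
    intro X
    rw [pow_succ, pow_succ, ContinuousLinearMap.mul_apply, Module.End.mul_apply, ih]
    rfl

lemma smul_clm_pow_apply (c : ℂ)
    (S : Matrix (Fin n) (Fin m) ℂ →L[ℂ] Matrix (Fin n) (Fin m) ℂ) (k : ℕ) :
    ∀ X : Matrix (Fin n) (Fin m) ℂ, ((c • S) ^ k) X = c ^ k • ((S ^ k) X) := by
  induction k with
  | zero => intro X; simp
  | succ k ih =>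
    intro X
    rw [pow_succ, pow_succ, pow_succ, ContinuousLinearMap.mul_apply,
      ContinuousLinearMap.mul_apply, ContinuousLinearMap.smul_apply, _root_.map_smul,
      ih (S X), smul_smul, mul_comm]

lemma sylvExp_eq_exp_apply (A : Matrix (Fin n) (Fin n) ℂ) (B : Matrix (Fin m) (Fin m) ℂ)
    (t : ℝ) (X : Matrix (Fin n) (Fin m) ℂ) :
    sylvExp A B t X = exp ((t : ℂ) • sylvCLM n m A B) X := by
  have h := ContinuousLinearMap.map_tsum (ContinuousLinearMap.apply ℂ _ X)
    (expSeries_summable' (𝕂 := ℂ) ((t : ℂ) • sylvCLM n m A B))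
  simp only [ContinuousLinearMap.apply_apply] at h
  rw [exp_eq_tsum ℂ]
  show sylvExp A B t X = (∑' k : ℕ, ((k.factorial : ℂ)⁻¹ • ((t : ℂ) • sylvCLM n m A B) ^ k)) X
  rw [h]
  refine tsum_congr fun k => ?_
  rw [ContinuousLinearMap.smul_apply, smul_clm_pow_apply, sylvCLM_pow_apply, smul_smul,
    div_eq_mul_inv, mul_comm]

lemma lmulHom_cont : Continuous (lmulHom n m) :=
  (LinearMap.continuous_of_finiteDimensional
    ((lmulHom n m).toLinearMap : Matrix (Fin n) (Fin n) ℂ →ₗ[ℂ] _) :)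

lemma rmulHom_cont : Continuous (rmulHom n m : (Matrix (Fin m) (Fin m) ℂ)ᵐᵒᵖ → _) :=
  (LinearMap.continuous_of_finiteDimensional
    ((rmulHom n m).toLinearMap : (Matrix (Fin m) (Fin m) ℂ)ᵐᵒᵖ →ₗ[ℂ] _) :)

lemma exp_lmul (A : Matrix (Fin n) (Fin n) ℂ) :
    exp (lmulHom n m A) = lmulHom n m (exp A) := by
  letI : SeminormedRing (Matrix (Fin n) (Fin n) ℂ) := Matrix.linftyOpSemiNormedRing
  letI : NormedRing (Matrix (Fin n) (Fin n) ℂ) := Matrix.linftyOpNormedRing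
  letI : NormedAlgebra ℂ (Matrix (Fin n) (Fin n) ℂ) := Matrix.linftyOpNormedAlgebra
  letI : NormedAlgebra ℚ (Matrix (Fin n) (Fin n) ℂ) := .restrictScalars ℚ ℂ _
  letI : @CompleteSpace (Matrix (Fin n) (Fin n) ℂ)
      (Matrix.linftyOpNormedRing (n := Fin n) (α := ℂ)).toUniformSpace :=
    FiniteDimensional.complete ℂ _
  exact (map_exp ((lmulHom n m) : Matrix (Fin n) (Fin n) ℂ →ₐ[ℂ] _) lmulHom_cont A).symm

lemma exp_rmul (B : Matrix (Fin m) (Fin m) ℂ) :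
    exp (rmulHom n m (op B)) = rmulHom n m (op (exp B)) := by
  letI : SeminormedRing (Matrix (Fin m) (Fin m) ℂ) := Matrix.linftyOpSemiNormedRing
  letI : NormedRing (Matrix (Fin m) (Fin m) ℂ) := Matrix.linftyOpNormedRing
  letI : NormedAlgebra ℂ (Matrix (Fin m) (Fin m) ℂ) := Matrix.linftyOpNormedAlgebra
  letI : NormedAlgebra ℚ (Matrix (Fin m) (Fin m) ℂ) := .restrictScalars ℚ ℂ _
  letI : @CompleteSpace (Matrix (Fin m) (Fin m) ℂ)
      (Matrix.linftyOpNormedRing (n := Fin m) (α := ℂ)).toUniformSpace :=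
    FiniteDimensional.complete ℂ _
  rw [← exp_op]
  exact (map_exp ((rmulHom n m) : (Matrix (Fin m) (Fin m) ℂ)ᵐᵒᵖ →ₐ[ℂ] _) rmulHom_cont
    (op B)).symm

lemma exp_sylvCLM (A : Matrix (Fin n) (Fin n) ℂ) (B : Matrix (Fin m) (Fin m) ℂ) :
    exp (sylvCLM n m A B) = lmulHom n m (exp A) * rmulHom n m (op (exp B)) := by
  have hcomm : Commute (lmulHom n m A : Matrix (Fin n) (Fin m) ℂ →L[ℂ] _)
      (rmulHom n m (op B)) := by
    show _ * _ = _ * _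
    ext X
    simp [ContinuousLinearMap.mul_apply, Matrix.mul_assoc]
  rw [sylvCLM, exp_add_of_commute hcomm, exp_lmul, exp_rmul]

lemma sylvExp_closed (A : Matrix (Fin n) (Fin n) ℂ) (B : Matrix (Fin m) (Fin m) ℂ)
    (t : ℝ) (X : Matrix (Fin n) (Fin m) ℂ) :
    sylvExp A B t X = exp ((t : ℂ) • A) * X * exp ((t : ℂ) • B) := by
  rw [sylvExp_eq_exp_apply]
  have hsmul : (t : ℂ) • sylvCLM n m A B = sylvCLM n m ((t : ℂ) • A) ((t : ℂ) • B) := by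
    rw [sylvCLM, sylvCLM, smul_add]
    congr 1
    · exact (map_smul (lmulHom n m).toLinearMap _ _).symm
    · rw [MulOpposite.op_smul]
      exact (map_smul (rmulHom n m).toLinearMap _ _).symm
  rw [hsmul, exp_sylvCLM, ContinuousLinearMap.mul_apply, rmulHom_apply, lmulHom_apply,
    unop_op, Matrix.mul_assoc]

lemma exp_smul_diag_conj (U : Matrix (Fin n) (Fin n) ℂ) (α : Fin n → ℂ) (hU : IsUnit U.det)
    (t : ℝ) :
    exp ((t : ℂ) • (U * Matrix.diagonal α * U⁻¹)) =
      U * Matrix.diagonal (fun i => Complex.exp (t * α i)) * U⁻¹ := by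
  have h1 : (t : ℂ) • (U * Matrix.diagonal α * U⁻¹) =
      U * Matrix.diagonal (fun i => (t : ℂ) * α i) * U⁻¹ := by
    rw [← Matrix.smul_mul, ← Matrix.mul_smul, ← Matrix.diagonal_smul]
    rfl
  rw [h1, Matrix.exp_conj U _ ((Matrix.isUnit_iff_isUnit_det U).mpr hU),
    Matrix.exp_diagonal]
  congr 1
  rw [Pi.exp_def]
  funext i
  rw [← Complex.exp_eq_exp_ℂ]


lemma diag_mul_diag (Y : Matrix (Fin n) (Fin m) ℂ) (d : Fin n → ℂ) (e : Fin m → ℂ) :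
    Matrix.diagonal d * Y * Matrix.diagonal e =
      ∑ i : Fin n, ∑ j : Fin m, (d i * e j) • Matrix.single i j (Y i j) := by
  ext p q
  simp only [Matrix.mul_diagonal, Matrix.diagonal_mul, Matrix.sum_apply, Matrix.smul_apply,
    Matrix.single, Matrix.of_apply, smul_eq_mul, mul_ite, mul_zero, ite_and,
    ite_and]
  rw [Finset.sum_eq_single_of_mem p (Finset.mem_univ p) (fun b _ hb => by simp [hb]),
    Finset.sum_eq_single_of_mem q (Finset.mem_univ q) (fun b _ hb => by simp [hb]),
    if_pos rfl, if_pos rfl]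
  ring

-- tendsto lemma
lemma tendsto_cexp_smul (γ : ℂ) (hγ : γ.re < 0) (M₀ : Matrix (Fin n) (Fin m) ℂ) :
    Filter.Tendsto (fun t : ℝ => Complex.exp (t * γ) • M₀) Filter.atTop (nhds 0) := by
  have h1 : Filter.Tendsto (fun t : ℝ => Complex.exp (t * γ)) Filter.atTop (nhds 0) := by
    rw [tendsto_zero_iff_norm_tendsto_zero]
    have : ∀ t : ℝ, ‖Complex.exp (t * γ)‖ = Real.exp (t * γ.re) := by
      intro t
      rw [Complex.norm_exp]
      congr 1
      simp [Complex.mul_re]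
    simp only [this]
    exact Real.tendsto_exp_atBot.comp
      ((Filter.tendsto_mul_const_atBot_of_neg hγ).mpr Filter.tendsto_id)
  simpa using h1.smul_const M₀

-- integrability lemma
lemma integrableOn_cexp_smul (γ : ℂ) (hγ : γ.re < 0) (M₀ : Matrix (Fin n) (Fin m) ℂ) :
    MeasureTheory.IntegrableOn (fun t : ℝ => Complex.exp (t * γ) • M₀) (Set.Ioi 0) := by
  apply MeasureTheory.Integrable.smul_const
  apply MeasureTheory.Integrable.mono' (g := fun t : ℝ => Real.exp (-(-γ.re) * t))
    (exp_neg_integrableOn_Ioi 0 (by linarith))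
  · exact ((Complex.continuous_exp.comp
      ((Complex.continuous_ofReal.mul continuous_const) : Continuous fun t : ℝ => (t : ℂ) * γ))).aestronglyMeasurable
  · filter_upwards with t
    rw [Complex.norm_exp]
    apply le_of_eq
    congr 1
    simp [Complex.mul_re]
    ring

lemma sylvExp_decomp (A U : Matrix (Fin n) (Fin n) ℂ) (B W : Matrix (Fin m) (Fin m) ℂ)
    (α : Fin n → ℂ) (β : Fin m → ℂ) (hU : IsUnit U.det) (hW : IsUnit W.det)
    (hA : A = U * Matrix.diagonal α * U⁻¹) (hB : B = W * Matrix.diagonal β * W⁻¹)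
    (X : Matrix (Fin n) (Fin m) ℂ) (t : ℝ) :
    sylvExp A B t X = ∑ i : Fin n, ∑ j : Fin m, Complex.exp (t * (α i + β j)) •
      (U * Matrix.single i j ((U⁻¹ * X * W) i j) * W⁻¹) := by
  rw [sylvExp_closed, hA, hB, exp_smul_diag_conj U α hU t, exp_smul_diag_conj W β hW t]
  have h1 : U * Matrix.diagonal (fun i => Complex.exp (t * α i)) * U⁻¹ * X *
      (W * Matrix.diagonal (fun j => Complex.exp (t * β j)) * W⁻¹) =
      U * (Matrix.diagonal (fun i => Complex.exp (t * α i)) * (U⁻¹ * X * W) *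
        Matrix.diagonal (fun j => Complex.exp (t * β j))) * W⁻¹ := by
    simp only [Matrix.mul_assoc]
  rw [h1, diag_mul_diag, Matrix.mul_sum, Matrix.sum_mul]
  refine Finset.sum_congr rfl fun i _ => ?_
  rw [Matrix.mul_sum, Matrix.sum_mul]
  refine Finset.sum_congr rfl fun j _ => ?_
  rw [Matrix.mul_smul, Matrix.smul_mul]
  congr 1
  rw [mul_add, Complex.exp_add]

end Stmt19Aux

end MatInst

open Stmt19Aux MeasureTheory Filter Set NormedSpace in
/-- if all eigenvalue sums α_i + β_j have negative real part, then
e^{tS}(X) → 0 as t → ∞, and ∫₀^∞ e^{sS}(C) ds = −S⁻¹(C), i.e. the integral J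
satisfies S(J) = −C. -/
theorem stmt19 {n m : ℕ} (A U : Matrix (Fin n) (Fin n) ℂ) (B W : Matrix (Fin m) (Fin m) ℂ)
    (α : Fin n → ℂ) (β : Fin m → ℂ)
    (hU : IsUnit U.det) (hW : IsUnit W.det)
    (hA : A = U * Matrix.diagonal α * U⁻¹)
    (hB : B = W * Matrix.diagonal β * W⁻¹)
    (hαβ : ∀ i j, (α i + β j).re < 0) :
    (∀ X : Matrix (Fin n) (Fin m) ℂ,
      Filter.Tendsto (fun t : ℝ => sylvExp A B t X) Filter.atTop (nhds 0)) ∧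
    (∀ C : Matrix (Fin n) (Fin m) ℂ,
      let J := ∫ s in Set.Ioi (0 : ℝ), sylvExp A B s C
      A * J + J * B = -C) := by
  letI : NormedAddCommGroup (Matrix (Fin n) (Fin m) ℂ) := matNACG
  letI : NormedSpace ℂ (Matrix (Fin n) (Fin m) ℂ) := matNSC
  letI : NormedSpace ℝ (Matrix (Fin n) (Fin m) ℂ) := matNSR
  letI : NormedAlgebra ℚ (Matrix (Fin n) (Fin m) ℂ →L[ℂ] Matrix (Fin n) (Fin m) ℂ) := clmNAQ
  have part1 : ∀ X : Matrix (Fin n) (Fin m) ℂ,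
      Filter.Tendsto (fun t : ℝ => sylvExp A B t X) Filter.atTop (nhds 0) := by
    intro X
    have hdec := sylvExp_decomp A U B W α β hU hW hA hB X
    have htd : Filter.Tendsto (fun t : ℝ => ∑ i : Fin n, ∑ j : Fin m,
        Complex.exp (t * (α i + β j)) • (U * Matrix.single i j ((U⁻¹ * X * W) i j) * W⁻¹))
        Filter.atTop (nhds (∑ _i : Fin n, ∑ _j : Fin m, (0 : Matrix (Fin n) (Fin m) ℂ))) := by
      refine tendsto_finset_sum _ fun i _ => tendsto_finset_sum _ fun j _ => ?_
      exact tendsto_cexp_smul _ (hαβ i j) _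
    have := htd.congr fun t => (hdec t).symm
    simpa using this
  refine ⟨part1, ?_⟩
  intro C
  show A * (∫ s in Set.Ioi (0 : ℝ), sylvExp A B s C) +
      (∫ s in Set.Ioi (0 : ℝ), sylvExp A B s C) * B = -C
  set T := sylvCLM n m A B with hT
  set g : ℝ → Matrix (Fin n) (Fin m) ℂ := fun s => sylvExp A B s C with hg
  have hgdec := sylvExp_decomp A U B W α β hU hW hA hB C
  have hgint : MeasureTheory.IntegrableOn g (Set.Ioi 0) := by
    rw [show g = fun s : ℝ => ∑ i : Fin n, ∑ j : Fin m, Complex.exp (s * (α i + β j)) •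
        (U * Matrix.single i j ((U⁻¹ * C * W) i j) * W⁻¹) from funext hgdec]
    refine MeasureTheory.integrable_finset_sum _ fun i _ =>
      MeasureTheory.integrable_finset_sum _ fun j _ => ?_
    exact integrableOn_cexp_smul _ (hαβ i j) _
  have hgexp : ∀ s : ℝ, g s = exp (s • T) C := by
    intro s
    calc g s = sylvExp A B s C := rfl
      _ = exp ((s : ℂ) • T) C := sylvExp_eq_exp_apply A B s C
      _ = exp (s • T) C := by
          rw [← Complex.coe_algebraMap, algebraMap_smul ℂ s T]
  have hderiv : ∀ s : ℝ, HasDerivAt g (A * g s + g s * B) s := by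
    intro s
    have hd : HasDerivAt (fun u : ℝ => exp (u • T)) (T * exp (s • T)) s :=
      hasDerivAt_exp_smul_const' (𝕂 := ℝ) T s
    have h2 := (((ContinuousLinearMap.apply ℂ (Matrix (Fin n) (Fin m) ℂ)
        C).restrictScalars ℝ).hasFDerivAt.comp_hasDerivAt s hd)
    have h3 : HasDerivAt g ((T * exp (s • T)) C) s :=
      h2.congr_of_eventuallyEq (Filter.Eventually.of_forall fun u => (hgexp u))
    have h4 : (T * exp (s • T)) C = A * g s + g s * B := by
      rw [ContinuousLinearMap.mul_apply, ← hgexp s, hT]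
      rfl
    rwa [h4] at h3
  have htend : Filter.Tendsto g Filter.atTop (nhds 0) := part1 C
  have hint' : MeasureTheory.IntegrableOn (fun s : ℝ => A * g s + g s * B) (Set.Ioi 0) :=
    (T.restrictScalars ℝ).integrable_comp hgint
  have key : (∫ s in Set.Ioi (0 : ℝ), (A * g s + g s * B)) = 0 - g 0 :=
    MeasureTheory.integral_Ioi_of_hasDerivAt_of_tendsto
      ((hderiv 0).continuousAt.continuousWithinAt) (fun x _ => hderiv x) hint' htend
  have hg0 : g 0 = C := by
    have hz : (0 : ℝ) • T = 0 := zero_smul ℝ T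
    rw [hgexp 0, hz, exp_zero, ContinuousLinearMap.one_apply]
  have hJ : A * (∫ s in Set.Ioi (0 : ℝ), g s) + (∫ s in Set.Ioi (0 : ℝ), g s) * B
      = (T.restrictScalars ℝ) (∫ s in Set.Ioi (0 : ℝ), g s) := rfl
  have hcomm : (T.restrictScalars ℝ) (∫ s in Set.Ioi (0 : ℝ), g s)
      = ∫ s in Set.Ioi (0 : ℝ), (T.restrictScalars ℝ) (g s) :=
    (ContinuousLinearMap.integral_comp_comm _ hgint).symm
  have hsame : (∫ s in Set.Ioi (0 : ℝ), (T.restrictScalars ℝ) (g s))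
      = ∫ s in Set.Ioi (0 : ℝ), (A * g s + g s * B) := rfl
  rw [hJ, hcomm, hsame, key, hg0, zero_sub]
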